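/- If Greedy(A ∪ B) ⊆ A for disjoint sets A and B, then Greedy(A ∪ B) = Greedy(A), where Greedy is the standard greedy algorithm with a fixed tie-breaking rule for a hereditary constraint. -/

import Mathlib

open MeasureTheory Finset

/-- A set function is submodular. -/
def Submodular {V : Type*} [DecidableEq V] (f : Finset V → ℝ) : Prop :=
  ∀ A B : Finset V, f (A ∪ B) + f (A ∩ B) ≤ f A + f B

/-- The Lovász extension: expectation over a uniform threshold θ ∈ (0,1). -/
noncomputable def lovasz {V : Type*} [Fintype V] [DecidableEq V]
    (f : Finset V → ℝ) (x : V → ℝ) : ℝ :=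
  ∫ θ in Set.Ioo (0:ℝ) 1, f (Finset.univ.filter (fun i => θ ≤ x i))

/-- Characteristic vector of a finite set. -/
def charVec {V : Type*} [DecidableEq V] (S : Finset V) : V → ℝ :=
  fun i => if i ∈ S then 1 else 0
/-- One pass of the standard greedy algorithm with fuel `n`: at each step add the
feasible element of `X` with maximum nonnegative marginal gain, breaking ties by
the fixed linear order on `V` (choosing the least maximizer). -/
noncomputable def greedyAux {V : Type*} [Fintype V] [DecidableEq V] [LinearOrder V]
    (f : Finset V → ℝ) (I : Finset V → Prop) [DecidablePred I]
    (X : Finset V) : ℕ → Finset V → Finset V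
  | 0, S => S
  | (n+1), S =>
    let C := (X \ S).filter (fun e => I (insert e S) ∧ 0 ≤ f (insert e S) - f S)
    let M := C.filter (fun e => ∀ e' ∈ C, f (insert e' S) - f S ≤ f (insert e S) - f S)
    if h : M.Nonempty then greedyAux f I X n (insert (M.min' h) S) else S

/-- The standard greedy algorithm on ground set `X`. -/
noncomputable def greedy {V : Type*} [Fintype V] [DecidableEq V] [LinearOrder V]
    (f : Finset V → ℝ) (I : Finset V → Prop) [DecidablePred I]
    (X : Finset V) : Finset V :=
  greedyAux f I X (Fintype.card V) ∅

lemma subset_greedyAux {V : Type*} [Fintype V] [DecidableEq V] [LinearOrder V]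
    (f : Finset V → ℝ) (I : Finset V → Prop) [DecidablePred I]
    (X : Finset V) : ∀ (n : ℕ) (S : Finset V), S ⊆ greedyAux f I X n S := by
  intro n
  induction n with
  | zero => intro S; simp [greedyAux]
  | succ n ih =>
    intro S
    rw [greedyAux]
    split
    · exact (Finset.subset_insert _ _).trans (ih _)
    · rfl

lemma greedyAux_subset_eq {V : Type*} [Fintype V] [DecidableEq V] [LinearOrder V]
    (f : Finset V → ℝ) (I : Finset V → Prop) [DecidablePred I]
    (A B : Finset V) :
    ∀ (n : ℕ) (S : Finset V), greedyAux f I (A ∪ B) n S ⊆ A →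
      greedyAux f I (A ∪ B) n S = greedyAux f I A n S := by
  intro n
  induction n with
  | zero => intro S _; rfl
  | succ n ih =>
    intro S hsub
    rw [greedyAux] at hsub ⊢
    rw [show greedyAux f I A (n+1) S =
      (let C := (A \ S).filter (fun e => I (insert e S) ∧ 0 ≤ f (insert e S) - f S)
       let M := C.filter (fun e => ∀ e' ∈ C, f (insert e' S) - f S ≤ f (insert e S) - f S)
       if h : M.Nonempty then greedyAux f I A n (insert (M.min' h) S) else S) from rfl]
    dsimp only at hsub ⊢
    set C1 := ((A ∪ B) \ S).filter (fun e => I (insert e S) ∧ 0 ≤ f (insert e S) - f S) with hC1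
    set C2 := (A \ S).filter (fun e => I (insert e S) ∧ 0 ≤ f (insert e S) - f S) with hC2
    set M1 := C1.filter (fun e => ∀ e' ∈ C1, f (insert e' S) - f S ≤ f (insert e S) - f S) with hM1
    set M2 := C2.filter (fun e => ∀ e' ∈ C2, f (insert e' S) - f S ≤ f (insert e S) - f S) with hM2
    have hC21 : C2 ⊆ C1 := by
      intro e he
      rw [hC2, Finset.mem_filter, Finset.mem_sdiff] at he
      rw [hC1, Finset.mem_filter, Finset.mem_sdiff]
      exact ⟨⟨Finset.mem_union_left _ he.1.1, he.1.2⟩, he.2⟩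
    by_cases h1 : M1.Nonempty
    · rw [dif_pos h1] at hsub ⊢
      set m := M1.min' h1 with hm
      have hm1 : m ∈ M1 := M1.min'_mem h1
      have hmmax := (Finset.mem_filter.1 hm1).2
      have hmC1 : m ∈ C1 := (Finset.mem_filter.1 hm1).1
      have hmA : m ∈ A := hsub (subset_greedyAux f I (A ∪ B) n _ (Finset.mem_insert_self m S))
      have hmC2 : m ∈ C2 := by
        rw [hC1, Finset.mem_filter, Finset.mem_sdiff] at hmC1
        rw [hC2, Finset.mem_filter, Finset.mem_sdiff]
        exact ⟨⟨hmA, hmC1.1.2⟩, hmC1.2⟩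
      have hmM2 : m ∈ M2 := Finset.mem_filter.2 ⟨hmC2, fun e' he' => hmmax e' (hC21 he')⟩
      have h2 : M2.Nonempty := ⟨m, hmM2⟩
      have hM21 : M2 ⊆ M1 := by
        intro e he
        rw [hM2, Finset.mem_filter] at he
        refine Finset.mem_filter.2 ⟨hC21 he.1, fun e' he' => le_trans (hmmax e' he') (he.2 m hmC2)⟩
      have heq : M2.min' h2 = m := le_antisymm (Finset.min'_le _ _ hmM2)
        (Finset.min'_le _ _ (hM21 (M2.min'_mem h2)) )
      rw [dif_pos h2, heq]
      exact ih _ hsub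
    · have hC1e : C1 = ∅ := by
        by_contra hne
        rcases Finset.exists_max_image C1 (fun e => f (insert e S) - f S)
          (Finset.nonempty_of_ne_empty hne) with ⟨m, hmC, hmax⟩
        exact h1 ⟨m, Finset.mem_filter.2 ⟨hmC, hmax⟩⟩
      have h2 : ¬ M2.Nonempty := by
        rintro ⟨e, he⟩
        have : e ∈ C1 := hC21 (Finset.mem_filter.1 he).1
        simp [hC1e] at this
      rw [dif_neg h1, dif_neg h2]

/-- If the greedy solution on `A ∪ B` only uses elements of `A`, it equals the
greedy solution on `A`. -/
theorem greedy_subset_eq {V : Type*} [Fintype V] [DecidableEq V] [LinearOrder V]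
    (f : Finset V → ℝ) (I : Finset V → Prop) [DecidablePred I]
    (hf : Submodular f) (hnn : ∀ A : Finset V, 0 ≤ f A)
    (hher : ∀ A B : Finset V, A ⊆ B → I B → I A) (hempty : I ∅)
    (A B : Finset V) (hdisj : Disjoint A B)
    (hsub : greedy f I (A ∪ B) ⊆ A) :
    greedy f I (A ∪ B) = greedy f I A := by
  exact greedyAux_subset_eq f I A B (Fintype.card V) ∅ hsub
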